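/- Let 0 → M →^i E →^p G → 1 be an extension with abelian kernel, N ⊴ G normal, and H ≤ E a partial semi-direct complement of N (i.e. p(H) = N and p|_H : H → N is an isomorphism). Then i(M) ∩ N_E(H) = i(M^N), where N_E(H) is the normalizer of H in E and M^N is the subgroup of elements of M fixed by the conjugation action of N. -/

import Mathlib

/-- Let `0 → M →ⁱ E →ᵖ G → 1` be an extension with abelian kernel, `N ⊴ G`,
and `H ≤ E` a partial semi-direct complement of `N` (`p(H) = N` and `p` injective on `H`).
Then `i(M) ∩ N_E(H) = i(M^N)`, where `M^N` consists of the elements of `M` fixed by the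
conjugation action of `N` (equivalently, fixed by conjugation by any `e ∈ E` with `p e ∈ N`). -/
theorem kernel_meet_normalizer (M E G : Type*) [CommGroup M] [Group E] [Group G]
    (i : M →* E) (p : E →* G) (hi : Function.Injective i) (hp : Function.Surjective p)
    (hex : i.range = p.ker)
    (N : Subgroup G) (hN : N.Normal)
    (H : Subgroup E) (hH1 : Subgroup.map p H = N) (hH2 : Set.InjOn p (H : Set E)) :
    (Subgroup.normalizer (H : Set E) : Set E) ∩ Set.range i
      = i '' {m : M | ∀ e : E, p e ∈ N → e * i m * e⁻¹ = i m} := by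
  have hpi : ∀ m : M, p (i m) = 1 := by
    intro m
    have : i m ∈ p.ker := hex ▸ ⟨m, rfl⟩
    exact this
  ext x
  simp only [Set.mem_inter_iff, Set.mem_range, Set.mem_image, Set.mem_setOf_eq, SetLike.mem_coe]
  constructor
  · rintro ⟨hx, m, rfl⟩
    refine ⟨m, ?_, rfl⟩
    intro e he
    rw [← hH1] at he
    obtain ⟨h, hh, hph⟩ := he
    -- i m commutes with h
    have hmem : i m * h * (i m)⁻¹ ∈ H := (Subgroup.mem_normalizer_iff.mp hx h).mp hh
    have hpeq : p (i m * h * (i m)⁻¹) = p h := by simp [hpi m]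
    have hcomm : i m * h * (i m)⁻¹ = h := hH2 hmem hh hpeq
    have hconj : h * i m * h⁻¹ = i m := by
      have : i m * h = h * i m := by
        calc i m * h = i m * h * (i m)⁻¹ * i m := by group
          _ = h * i m := by rw [hcomm]
      calc h * i m * h⁻¹ = i m * h * h⁻¹ := by rw [this]
        _ = i m := by group
    -- write e = i m' * h
    have hk : e * h⁻¹ ∈ p.ker := by
      simp [MonoidHom.mem_ker, hph]
    rw [← hex] at hk
    obtain ⟨m', hm'⟩ := hk
    have he' : e = i m' * h := by rw [hm']; group
    have hcomm' : i m' * i m = i m * i m' := by rw [← map_mul, ← map_mul, mul_comm]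
    calc e * i m * e⁻¹ = i m' * (h * i m * h⁻¹) * (i m')⁻¹ := by rw [he']; group
      _ = i m' * i m * (i m')⁻¹ := by rw [hconj]
      _ = i m * i m' * (i m')⁻¹ := by rw [hcomm']
      _ = i m := by group
  · rintro ⟨m, hm, rfl⟩
    refine ⟨?_, m, rfl⟩
    rw [Subgroup.mem_normalizer_iff]
    intro h
    constructor
    · intro hh
      have hpe : p h ∈ N := hH1 ▸ ⟨h, hh, rfl⟩
      have hconj := hm h hpe
      have : i m * h * (i m)⁻¹ = h := by
        have : h * i m = i m * h := by
          calc h * i m = h * i m * h⁻¹ * h := by group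
            _ = i m * h := by rw [hconj]
        calc i m * h * (i m)⁻¹ = h * i m * (i m)⁻¹ := by rw [this]
          _ = h := by group
      rw [this]; exact hh
    · intro hh'
      set h' := i m * h * (i m)⁻¹ with hdef
      have hpe : p h' ∈ N := hH1 ▸ ⟨h', hh', rfl⟩
      have hconj := hm h' hpe
      have hkey : h * i m * h⁻¹ = i m := by
        have expand : i m * (h * i m * h⁻¹) * (i m)⁻¹ = i m := by
          calc i m * (h * i m * h⁻¹) * (i m)⁻¹ = h' * i m * h'⁻¹ := by rw [hdef]; group
            _ = i m := hconj
        calc h * i m * h⁻¹ = (i m)⁻¹ * (i m * (h * i m * h⁻¹) * (i m)⁻¹) * i m := by group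
          _ = (i m)⁻¹ * i m * i m := by rw [expand]
          _ = i m := by group
      have hc : i m * h = h * i m := by
        calc i m * h = h * i m * h⁻¹ * h := by rw [hkey]
          _ = h * i m := by group
      have : h' = h := by
        calc h' = i m * h * (i m)⁻¹ := hdef
          _ = h * i m * (i m)⁻¹ := by rw [hc]
          _ = h := by group
      rw [← this]; exact hh'
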